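/- Let 𝔤 be a finite-dimensional simple complex Lie algebra with Killing form β and let (e₁,e₂) ∈ ℂ². Define c: ℤ × ℤ → ℂ by c(n,m) = −n·δ_{m,−n} if n and m are both even; c(n,m) = 0 if n and m have different parity; and c(n,m) = −n·δ_{m,−n} + 3e₁(−n+1)·δ_{m,−n+2} + (e₁−e₂)(2e₁+e₂)(−n+2)·δ_{m,−n+4} if n and m are both odd. Then the bilinear form γ on Ḡ^(e₁,e₂) determined by γ(x ⊗ Aₙ, y ⊗ Aₘ) = β(x,y)·c(n,m) is an alternating Lie algebra 2-cocycle with values in the trivial module ℂ, i.e. γ([a,b],c') + γ([b,c'],a) + γ([c',a],b) = 0 for all a,b,c' ∈ Ḡ^(e₁,e₂). -/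

import Mathlib

open scoped Classical

/-- The bracket of the genus-one current algebra family
`Ḡ^(e₁,e₂) = 𝔤 ⊗ A^(e₁,e₂)`, where the tensor product of `𝔤` with the
ℂ-vector space with basis `{Aₙ}_{n∈ℤ}` is modeled as `ℤ →₀ 𝔤`, the pure
tensor `x ⊗ Aₙ` corresponding to `Finsupp.single n x`.  The bracket is the
bilinear extension of:
`[x ⊗ Aₙ, y ⊗ Aₘ] = [x,y] ⊗ Aₙ₊ₘ` if `n` or `m` is even, and
`[x ⊗ Aₙ, y ⊗ Aₘ] = [x,y] ⊗ (Aₙ₊ₘ + 3e₁Aₙ₊ₘ₋₂ + (e₁−e₂)(2e₁+e₂)Aₙ₊ₘ₋₄)`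
if both `n` and `m` are odd. -/
noncomputable def Gbr (𝔤 : Type*) [LieRing 𝔤] [LieAlgebra ℂ 𝔤]
    (e₁ e₂ : ℂ) (f g : ℤ →₀ 𝔤) : ℤ →₀ 𝔤 :=
  f.sum fun n x => g.sum fun m y =>
    if Odd n ∧ Odd m then
      Finsupp.single (n + m) ⁅x, y⁆ + (3 * e₁) • Finsupp.single (n + m - 2) ⁅x, y⁆
        + ((e₁ - e₂) * (2 * e₁ + e₂)) • Finsupp.single (n + m - 4) ⁅x, y⁆
    else Finsupp.single (n + m) ⁅x, y⁆

/-- The coefficient `c(n,m)` of the central-extension cocycle: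
`c(n,m) = −n·δ_{m,−n}` if `n, m` are both even; `c(n,m) = 0` if `n, m` have
different parity; and
`c(n,m) = −n·δ_{m,−n} + 3e₁(−n+1)·δ_{m,−n+2} + (e₁−e₂)(2e₁+e₂)(−n+2)·δ_{m,−n+4}`
if `n, m` are both odd. -/
noncomputable def ccoef (e₁ e₂ : ℂ) (n m : ℤ) : ℂ :=
  if Even n ∧ Even m then
    ((-n : ℤ) : ℂ) * (if m = -n then 1 else 0)
  else if Odd n ∧ Odd m then
    ((-n : ℤ) : ℂ) * (if m = -n then 1 else 0)
      + 3 * e₁ * ((-n + 1 : ℤ) : ℂ) * (if m = -n + 2 then 1 else 0)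
      + (e₁ - e₂) * (2 * e₁ + e₂) * ((-n + 2 : ℤ) : ℂ) * (if m = -n + 4 then 1 else 0)
  else 0

/-- The bilinear form `γ` on `Ḡ^(e₁,e₂)` determined by
`γ(x ⊗ Aₙ, y ⊗ Aₘ) = β(x,y)·c(n,m)`, with `β` the Killing form of `𝔤`. -/
noncomputable def gammaCocycle (𝔤 : Type*) [LieRing 𝔤] [LieAlgebra ℂ 𝔤]
    (e₁ e₂ : ℂ) (f g : ℤ →₀ 𝔤) : ℂ :=
  f.sum fun n x => g.sum fun m y => killingForm ℂ 𝔤 x y * ccoef e₁ e₂ n m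

noncomputable def Cc (e₁ e₂ : ℂ) (n m k : ℤ) : ℂ :=
  if Odd n ∧ Odd m then
    ccoef e₁ e₂ (n + m) k + 3 * e₁ * ccoef e₁ e₂ (n + m - 2) k
      + (e₁ - e₂) * (2 * e₁ + e₂) * ccoef e₁ e₂ (n + m - 4) k
  else ccoef e₁ e₂ (n + m) k

set_option maxHeartbeats 2000000 in
lemma key (e₁ e₂ : ℂ) (n m k : ℤ) :
    Cc e₁ e₂ n m k + Cc e₁ e₂ m k n + Cc e₁ e₂ k n m = 0 := by
  have e2 : Even (2:ℤ) := ⟨1, rfl⟩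
  have e4 : Even (4:ℤ) := ⟨2, rfl⟩
  rcases Int.even_or_odd n with hn | hn <;>
  rcases Int.even_or_odd m with hm | hm <;>
  rcases Int.even_or_odd k with hk | hk <;>
  (try have hn' : ¬ Odd n := Int.not_odd_iff_even.mpr hn) <;>
  (try have hm' : ¬ Odd m := Int.not_odd_iff_even.mpr hm) <;>
  (try have hk' : ¬ Odd k := Int.not_odd_iff_even.mpr hk) <;>
  (try have hn' : ¬ Even n := Int.not_even_iff_odd.mpr hn) <;>
  (try have hm' : ¬ Even m := Int.not_even_iff_odd.mpr hm) <;>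
  (try have hk' : ¬ Even k := Int.not_even_iff_odd.mpr hk) <;>
  (simp only [Cc, ccoef, Int.even_add, Int.even_sub, Int.odd_add, Int.odd_sub]
   simp only [hn, hm, hk, hn', hm', hk', e2, e4, iff_true, iff_false, true_iff, false_iff,
     true_and, and_true, false_and, and_false, if_true, if_false, not_true, not_false_iff,
     Int.not_even_iff_odd, Int.not_odd_iff_even]
   try norm_num
   try (split_ifs <;> first | (exfalso; omega) | (subst_vars; push_cast; ring)))

set_option maxHeartbeats 1000000 in
lemma ccoef_skew (e₁ e₂ : ℂ) (n m : ℤ) : ccoef e₁ e₂ m n = - ccoef e₁ e₂ n m := by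
  have e2 : Even (2:ℤ) := ⟨1, rfl⟩
  have e4 : Even (4:ℤ) := ⟨2, rfl⟩
  rcases Int.even_or_odd n with hn | hn <;>
  rcases Int.even_or_odd m with hm | hm <;>
  (try have hn' : ¬ Odd n := Int.not_odd_iff_even.mpr hn) <;>
  (try have hm' : ¬ Odd m := Int.not_odd_iff_even.mpr hm) <;>
  (try have hn' : ¬ Even n := Int.not_even_iff_odd.mpr hn) <;>
  (try have hm' : ¬ Even m := Int.not_even_iff_odd.mpr hm) <;>
  (simp only [ccoef]
   simp only [hn, hm, hn', hm', e2, e4, iff_true, iff_false, true_and, and_true, false_and,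
     and_false, if_true, if_false]
   try norm_num
   try (split_ifs <;> first | (exfalso; omega) | (subst_vars; push_cast; ring)))

section
variable {𝔤 : Type} [LieRing 𝔤] [LieAlgebra ℂ 𝔤] (e₁ e₂ : ℂ)

lemma gamma_single_single (n m : ℤ) (x y : 𝔤) :
    gammaCocycle 𝔤 e₁ e₂ (Finsupp.single n x) (Finsupp.single m y)
      = killingForm ℂ 𝔤 x y * ccoef e₁ e₂ n m := by
  simp [gammaCocycle, Finsupp.sum_single_index]

lemma gamma_zero_left (g : ℤ →₀ 𝔤) : gammaCocycle 𝔤 e₁ e₂ 0 g = 0 := by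
  simp [gammaCocycle]

lemma gamma_zero_right (f : ℤ →₀ 𝔤) : gammaCocycle 𝔤 e₁ e₂ f 0 = 0 := by
  simp [gammaCocycle]

lemma gamma_add_left (f f' g : ℤ →₀ 𝔤) :
    gammaCocycle 𝔤 e₁ e₂ (f + f') g
      = gammaCocycle 𝔤 e₁ e₂ f g + gammaCocycle 𝔤 e₁ e₂ f' g := by
  unfold gammaCocycle
  apply Finsupp.sum_add_index' <;> intros <;>
    simp [Finsupp.sum, add_mul, Finset.sum_add_distrib]

lemma gamma_add_right (f g g' : ℤ →₀ 𝔤) :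
    gammaCocycle 𝔤 e₁ e₂ f (g + g')
      = gammaCocycle 𝔤 e₁ e₂ f g + gammaCocycle 𝔤 e₁ e₂ f g' := by
  unfold gammaCocycle
  rw [← Finsupp.sum_add]
  apply Finsupp.sum_congr
  intro n _
  apply Finsupp.sum_add_index' <;> intros <;> simp [add_mul]

lemma Gbr_single_single (n m : ℤ) (x y : 𝔤) :
    Gbr 𝔤 e₁ e₂ (Finsupp.single n x) (Finsupp.single m y)
      = if Odd n ∧ Odd m then
          Finsupp.single (n + m) ⁅x, y⁆ + (3 * e₁) • Finsupp.single (n + m - 2) ⁅x, y⁆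
            + ((e₁ - e₂) * (2 * e₁ + e₂)) • Finsupp.single (n + m - 4) ⁅x, y⁆
        else Finsupp.single (n + m) ⁅x, y⁆ := by
  unfold Gbr
  rw [Finsupp.sum_single_index, Finsupp.sum_single_index] <;>
    (try split_ifs) <;> simp [Finsupp.sum]

lemma Gbr_zero_left (g : ℤ →₀ 𝔤) : Gbr 𝔤 e₁ e₂ 0 g = 0 := by simp [Gbr]

lemma Gbr_zero_right (f : ℤ →₀ 𝔤) : Gbr 𝔤 e₁ e₂ f 0 = 0 := by simp [Gbr]

lemma Gbr_add_left (f f' g : ℤ →₀ 𝔤) :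
    Gbr 𝔤 e₁ e₂ (f + f') g = Gbr 𝔤 e₁ e₂ f g + Gbr 𝔤 e₁ e₂ f' g := by
  unfold Gbr
  apply Finsupp.sum_add_index'
  · intro a
    simp [Finsupp.sum]
  · intro a b₁ b₂
    rw [← Finsupp.sum_add]
    apply Finsupp.sum_congr
    intro m y
    split_ifs <;> simp [lie_add, add_lie, smul_add, Finsupp.single_add] <;> abel

lemma Gbr_add_right (f g g' : ℤ →₀ 𝔤) :
    Gbr 𝔤 e₁ e₂ f (g + g') = Gbr 𝔤 e₁ e₂ f g + Gbr 𝔤 e₁ e₂ f g' := by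
  unfold Gbr
  rw [← Finsupp.sum_add]
  apply Finsupp.sum_congr
  intro n x
  apply Finsupp.sum_add_index'
  · intro a
    split_ifs <;> simp
  · intro a b₁ b₂
    split_ifs <;> simp [lie_add, add_lie, smul_add, Finsupp.single_add] <;> abel

lemma gamma_Gbr_single (n m k : ℤ) (x y z : 𝔤) :
    gammaCocycle 𝔤 e₁ e₂ (Gbr 𝔤 e₁ e₂ (Finsupp.single n x) (Finsupp.single m y))
        (Finsupp.single k z)
      = killingForm ℂ 𝔤 ⁅x, y⁆ z * Cc e₁ e₂ n m k := by
  rw [Gbr_single_single, Cc]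
  split_ifs with h
  · simp only [Finsupp.smul_single]
    rw [gamma_add_left, gamma_add_left, gamma_single_single, gamma_single_single,
      gamma_single_single]
    simp only [LinearMap.map_smul₂, smul_eq_mul, LinearMap.smul_apply]
    ring
  · rw [gamma_single_single]

lemma gamma_skew (f g : ℤ →₀ 𝔤) :
    gammaCocycle 𝔤 e₁ e₂ f g = - gammaCocycle 𝔤 e₁ e₂ g f := by
  induction f using Finsupp.induction_linear generalizing g with
  | zero => simp [gamma_zero_left, gamma_zero_right]
  | add f f' hf hf' => rw [gamma_add_left, gamma_add_right, hf, hf']; ring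
  | single n x =>
    induction g using Finsupp.induction_linear with
    | zero => simp [gamma_zero_left, gamma_zero_right]
    | add g g' hg hg' => rw [gamma_add_left, gamma_add_right, hg, hg']; ring
    | single m y =>
      rw [gamma_single_single, gamma_single_single, ccoef_skew,
        LieModule.traceForm_comm ℂ 𝔤 𝔤 y x]
      ring

theorem gamma_is_alternating_two_cocycle' [FiniteDimensional ℂ 𝔤]
    [LieAlgebra.IsSimple ℂ 𝔤] :
    (∀ a : ℤ →₀ 𝔤, gammaCocycle 𝔤 e₁ e₂ a a = 0) ∧
    (∀ a b c' : ℤ →₀ 𝔤,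
      gammaCocycle 𝔤 e₁ e₂ (Gbr 𝔤 e₁ e₂ a b) c'
        + gammaCocycle 𝔤 e₁ e₂ (Gbr 𝔤 e₁ e₂ b c') a
        + gammaCocycle 𝔤 e₁ e₂ (Gbr 𝔤 e₁ e₂ c' a) b = 0) := by
  constructor
  · intro a
    have h := gamma_skew e₁ e₂ a a
    linear_combination h / 2
  · intro a b c'
    induction a using Finsupp.induction_linear generalizing b c' with
    | zero => simp [gamma_zero_left, gamma_zero_right, Gbr_zero_left, Gbr_zero_right]
    | add f f' hf hf' =>
      rw [Gbr_add_left, Gbr_add_right, gamma_add_left, gamma_add_right, gamma_add_left]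
      linear_combination hf b c' + hf' b c'
    | single n x =>
      induction b using Finsupp.induction_linear generalizing c' with
      | zero => simp [gamma_zero_left, gamma_zero_right, Gbr_zero_left, Gbr_zero_right]
      | add g g' hg hg' =>
        rw [Gbr_add_right, Gbr_add_left, gamma_add_left, gamma_add_left, gamma_add_right]
        linear_combination hg c' + hg' c'
      | single m y =>
        induction c' using Finsupp.induction_linear with
        | zero => simp [gamma_zero_left, gamma_zero_right, Gbr_zero_left, Gbr_zero_right]
        | add h h' hh hh' =>
          rw [Gbr_add_right, Gbr_add_left, gamma_add_right, gamma_add_left, gamma_add_left]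
          linear_combination hh + hh'
        | single k z =>
          rw [gamma_Gbr_single, gamma_Gbr_single, gamma_Gbr_single]
          have h1 : killingForm ℂ 𝔤 ⁅y, z⁆ x = killingForm ℂ 𝔤 ⁅x, y⁆ z :=
            ((LieModule.traceForm_apply_lie_apply ℂ 𝔤 𝔤 x y z).trans
              (LieModule.traceForm_comm ℂ 𝔤 𝔤 x ⁅y, z⁆)).symm
          have h2 : killingForm ℂ 𝔤 ⁅z, x⁆ y = killingForm ℂ 𝔤 ⁅x, y⁆ z :=
            (LieModule.traceForm_apply_lie_apply ℂ 𝔤 𝔤 z x y).trans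
              (LieModule.traceForm_comm ℂ 𝔤 𝔤 z ⁅x, y⁆)
          rw [h1, h2]
          have := key e₁ e₂ n m k
          linear_combination killingForm ℂ 𝔤 ⁅x, y⁆ z * this

end

/-- For `𝔤` a finite-dimensional simple complex Lie algebra
with Killing form `β` and `(e₁,e₂) ∈ ℂ²`, the bilinear form `γ` on
`Ḡ^(e₁,e₂)` determined by `γ(x ⊗ Aₙ, y ⊗ Aₘ) = β(x,y)·c(n,m)` is an
alternating Lie algebra 2-cocycle with values in the trivial module ℂ:
`γ([a,b],c') + γ([b,c'],a) + γ([c',a],b) = 0` for all `a, b, c'`. -/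
theorem gamma_is_alternating_two_cocycle (𝔤 : Type) [LieRing 𝔤] [LieAlgebra ℂ 𝔤]
    [FiniteDimensional ℂ 𝔤] [LieAlgebra.IsSimple ℂ 𝔤] (e₁ e₂ : ℂ) :
    (∀ a : ℤ →₀ 𝔤, gammaCocycle 𝔤 e₁ e₂ a a = 0) ∧
    (∀ a b c' : ℤ →₀ 𝔤,
      gammaCocycle 𝔤 e₁ e₂ (Gbr 𝔤 e₁ e₂ a b) c'
        + gammaCocycle 𝔤 e₁ e₂ (Gbr 𝔤 e₁ e₂ b c') a
        + gammaCocycle 𝔤 e₁ e₂ (Gbr 𝔤 e₁ e₂ c' a) b = 0) := by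
  exact gamma_is_alternating_two_cocycle' e₁ e₂
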